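/- Let f : R^n → R be C³ on B(x⁰, Δ̄) with Hessian Lipschitz constant L. Let X have directions d¹,…,dᵐ with S = [d¹ ⋯ dᵐ] of full column rank m < n (underdetermined case), radius Δ < Δ̄. Let U = span S and Proj_U = S(SᵀS)^{-1}Sᵀ. Then ‖Proj_U ∇ᶜf(X) − Proj_U ∇f(x⁰)‖ ≤ (L√m/6)‖(Ŝᵀ)†‖ Δ², where ∇ᶜf(X) = (Sᵀ)†δᶜ, δᶜᵢ = (f(x⁰+dⁱ)−f(x⁰−dⁱ))/2, and Ŝ = S/Δ. -/

import Mathlib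

open Metric Matrix

/-- `B` is the Moore–Penrose pseudoinverse of `A`: the four Penrose equations. -/
def IsMPInv {n m : Type*} [Fintype n] [Fintype m]
    (A : Matrix n m ℝ) (B : Matrix m n ℝ) : Prop :=
  A * B * A = A ∧ B * A * B = B ∧ (A * B)ᵀ = A * B ∧ (B * A)ᵀ = B * A

/-- The ℓ²→ℓ² operator (spectral) norm of a real matrix. -/
noncomputable def opNorm {a b : ℕ} (A : Matrix (Fin a) (Fin b) ℝ) : ℝ :=
  ‖LinearMap.toContinuousLinearMap (Matrix.toEuclideanLin A)‖

open Set in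
lemma central_diff_bound {E : Type*} [NormedAddCommGroup E] [NormedSpace ℝ E]
    (f : E → ℝ) (x₀ : E) (Δbar L : ℝ)
    (hf : ContDiffOn ℝ 3 f (ball x₀ Δbar))
    (hL : ∀ x ∈ ball x₀ Δbar, ∀ y ∈ ball x₀ Δbar,
      ‖fderiv ℝ (fderiv ℝ f) x - fderiv ℝ (fderiv ℝ f) y‖ ≤ L * ‖x - y‖)
    (v : E) (hv : ‖v‖ < Δbar) :
    |(f (x₀ + v) - f (x₀ - v)) / 2 - fderiv ℝ f x₀ v| ≤ L * ‖v‖ ^ 3 / 6 := by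
  set F := fderiv ℝ f with hFdef
  set H := fderiv ℝ F with hHdef
  have hmem : ∀ t ∈ Icc (0:ℝ) 1, ∀ s : ℝ, |s| = 1 → x₀ + (s*t) • v ∈ ball x₀ Δbar := by
    intro t ht s hs
    simp only [mem_ball, dist_eq_norm, add_sub_cancel_left]
    calc ‖(s*t) • v‖ = |s*t| * ‖v‖ := by rw [norm_smul, Real.norm_eq_abs]
    _ ≤ 1 * ‖v‖ := by
        apply mul_le_mul_of_nonneg_right _ (norm_nonneg v)
        rw [abs_mul, hs, one_mul]
        exact abs_le.2 ⟨by linarith [ht.1, ht.2], ht.2⟩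
    _ < Δbar := by simpa using hv
  have hmemp : ∀ t ∈ Icc (0:ℝ) 1, x₀ + t • v ∈ ball x₀ Δbar := by
    intro t ht; simpa using hmem t ht 1 (by norm_num)
  have hmemm : ∀ t ∈ Icc (0:ℝ) 1, x₀ - t • v ∈ ball x₀ Δbar := by
    intro t ht
    have := hmem t ht (-1) (by norm_num)
    simpa [neg_smul, sub_eq_add_neg] using this
  have hca : ∀ x ∈ ball x₀ Δbar, ContDiffAt ℝ 3 f x := fun x hx =>
    hf.contDiffAt (isOpen_ball.mem_nhds hx)
  have hdf : ∀ x ∈ ball x₀ Δbar, HasFDerivAt f (F x) x := fun x hx =>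
    ((hca x hx).differentiableAt (by norm_num)).hasFDerivAt
  have hcF : ∀ x ∈ ball x₀ Δbar, ContDiffAt ℝ 2 F x := fun x hx =>
    (hca x hx).fderiv_right (by norm_num)
  have hdF : ∀ x ∈ ball x₀ Δbar, HasFDerivAt F (H x) x := fun x hx =>
    ((hcF x hx).differentiableAt (by norm_num)).hasFDerivAt
  -- curves
  have hcurvp : ∀ t : ℝ, HasDerivAt (fun t : ℝ => x₀ + t • v) v t := by
    intro t
    simpa using ((hasDerivAt_id t).smul_const v).const_add x₀
  have hcurvm : ∀ t : ℝ, HasDerivAt (fun t : ℝ => x₀ - t • v) (-v) t := by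
    intro t
    simpa [sub_eq_add_neg, neg_smul] using
      (((hasDerivAt_id t).smul_const v).neg.const_add x₀)
  set g : ℝ → ℝ := fun t => f (x₀ + t • v) - f (x₀ - t • v) - 2 * t * F x₀ v with hgdef
  set g' : ℝ → ℝ := fun t => F (x₀ + t • v) v + F (x₀ - t • v) v - 2 * F x₀ v with hg'def
  set g'' : ℝ → ℝ := fun t => H (x₀ + t • v) v v - H (x₀ - t • v) v v with hg''def
  have hx₀mem : x₀ ∈ ball x₀ Δbar := by
    simp [mem_ball]; linarith [norm_nonneg v]
  have hdg : ∀ t ∈ Icc (0:ℝ) 1, HasDerivAt g (g' t) t := by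
    intro t ht
    have h1 : HasDerivAt (fun t : ℝ => f (x₀ + t • v)) (F (x₀ + t • v) v) t :=
      (hdf _ (hmemp t ht)).comp_hasDerivAt t (hcurvp t)
    have h2 : HasDerivAt (fun t : ℝ => f (x₀ - t • v)) (F (x₀ - t • v) (-v)) t :=
      (hdf _ (hmemm t ht)).comp_hasDerivAt t (hcurvm t)
    have h3 : HasDerivAt (fun t : ℝ => 2 * t * F x₀ v) (2 * F x₀ v) t := by
      simpa [mul_assoc, mul_comm] using
        ((hasDerivAt_id t).const_mul 2).mul_const (F x₀ v)
    have := (h1.sub h2).sub h3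
    simp only [map_neg] at this
    exact this.congr_deriv (by simp only [hg'def]; ring)
  have hdg' : ∀ t ∈ Icc (0:ℝ) 1, HasDerivAt g' (g'' t) t := by
    intro t ht
    have h1 : HasDerivAt (fun t : ℝ => F (x₀ + t • v) v) (H (x₀ + t • v) v v) t := by
      have hc : HasDerivAt (fun t : ℝ => F (x₀ + t • v)) (H (x₀ + t • v) v) t :=
        (hdF _ (hmemp t ht)).comp_hasDerivAt t (hcurvp t)
      exact (ContinuousLinearMap.apply ℝ ℝ v).hasFDerivAt.comp_hasDerivAt t hc
    have h2 : HasDerivAt (fun t : ℝ => F (x₀ - t • v) v) (-(H (x₀ - t • v) v v)) t := by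
      have hc : HasDerivAt (fun t : ℝ => F (x₀ - t • v)) (H (x₀ - t • v) (-v)) t :=
        (hdF _ (hmemm t ht)).comp_hasDerivAt t (hcurvm t)
      have := (ContinuousLinearMap.apply ℝ ℝ v).hasFDerivAt.comp_hasDerivAt t hc
      simpa [Function.comp_def] using this
    have := (h1.add h2).sub_const (2 * F x₀ v)
    exact this.congr_deriv (by simp only [hg''def]; ring)
  have hbound : ∀ t ∈ Ico (0:ℝ) 1, ‖g'' t‖ ≤ 2 * L * ‖v‖ ^ 3 * t := by
    intro t ht
    have htI : t ∈ Icc (0:ℝ) 1 := ⟨ht.1, le_of_lt ht.2⟩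
    have key : ‖H (x₀ + t • v) - H (x₀ - t • v)‖ ≤ L * (2 * t * ‖v‖) := by
      have := hL _ (hmemp t htI) _ (hmemm t htI)
      calc ‖H (x₀ + t • v) - H (x₀ - t • v)‖ ≤ L * ‖(x₀ + t • v) - (x₀ - t • v)‖ := this
      _ = L * (2 * t * ‖v‖) := by
          congr 1
          have : (x₀ + t • v) - (x₀ - t • v) = (2 * t) • v := by
            rw [two_mul, add_smul]; abel
          rw [this, norm_smul, Real.norm_eq_abs, abs_of_nonneg (by linarith [ht.1] : (0:ℝ) ≤ 2*t)]
    have : g'' t = ((H (x₀ + t • v) - H (x₀ - t • v)) v) v := by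
      simp [hg''def]
    rw [this]
    calc ‖((H (x₀ + t • v) - H (x₀ - t • v)) v) v‖
        ≤ ‖(H (x₀ + t • v) - H (x₀ - t • v)) v‖ * ‖v‖ :=
          ContinuousLinearMap.le_opNorm _ _
      _ ≤ (‖H (x₀ + t • v) - H (x₀ - t • v)‖ * ‖v‖) * ‖v‖ :=
          mul_le_mul_of_nonneg_right
            (ContinuousLinearMap.le_opNorm _ _) (norm_nonneg v)
      _ ≤ ((L * (2 * t * ‖v‖)) * ‖v‖) * ‖v‖ := by
          have h0 : (0:ℝ) ≤ ‖v‖ := norm_nonneg v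
          gcongr
      _ = 2 * L * ‖v‖ ^ 3 * t := by ring
  -- step 1: ‖g' t‖ ≤ L‖v‖³ t²
  have step1 : ∀ t ∈ Icc (0:ℝ) 1, ‖g' t‖ ≤ L * ‖v‖ ^ 3 * t ^ 2 := by
    have hg'0 : g' 0 = 0 := by simp [hg'def]; ring
    have hB : ∀ t : ℝ, HasDerivAt (fun t => L * ‖v‖ ^ 3 * t ^ 2) (2 * L * ‖v‖ ^ 3 * t) t := by
      intro t
      have := (hasDerivAt_pow 2 t).const_mul (L * ‖v‖ ^ 3)
      exact this.congr_deriv (by norm_num; ring)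
    intro t ht
    exact image_norm_le_of_norm_deriv_right_le_deriv_boundary
      (fun s hs => ((hdg' s hs).continuousAt).continuousWithinAt)
      (fun s hs => ((hdg' s ⟨hs.1, le_of_lt hs.2⟩).hasDerivWithinAt))
      (by simp [hg'0]) hB hbound ht
  -- step 2: ‖g 1‖ ≤ L‖v‖³/3
  have step2 : ‖g 1‖ ≤ L * ‖v‖ ^ 3 / 3 := by
    have hg0 : g 0 = 0 := by simp [hgdef]
    have hB : ∀ t : ℝ, HasDerivAt (fun t => L * ‖v‖ ^ 3 / 3 * t ^ 3) (L * ‖v‖ ^ 3 * t ^ 2) t := by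
      intro t
      have := (hasDerivAt_pow 3 t).const_mul (L * ‖v‖ ^ 3 / 3)
      exact this.congr_deriv (by norm_num; ring)
    have := image_norm_le_of_norm_deriv_right_le_deriv_boundary
      (f := g) (a := 0) (b := 1)
      (fun s hs => ((hdg s hs).continuousAt).continuousWithinAt)
      (fun s hs => ((hdg s ⟨hs.1, le_of_lt hs.2⟩).hasDerivWithinAt))
      (by simp [hg0]) hB
      (fun s hs => step1 s ⟨hs.1, le_of_lt hs.2⟩)
      (right_mem_Icc.2 zero_le_one)
    simpa using this
  have hg1 : g 1 = f (x₀ + v) - f (x₀ - v) - 2 * F x₀ v := by simp [hgdef]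
  rw [Real.norm_eq_abs, hg1] at step2
  have : (f (x₀ + v) - f (x₀ - v)) / 2 - F x₀ v
      = (f (x₀ + v) - f (x₀ - v) - 2 * F x₀ v) / 2 := by ring
  rw [this, abs_div]
  rw [abs_of_nonneg (by norm_num : (0:ℝ) ≤ 2)]
  linarith

/-- GCSG error bound in the underdetermined case: if `S` has full column rank `m < n`,
`P = (Sᵀ)†`, `Proj_U = (Sᵀ)†Sᵀ = P Sᵀ` and `∇ᶜf(X) = P δᶜ`, then
`‖Proj_U ∇ᶜf(X) − Proj_U ∇f(x⁰)‖ ≤ (L√m/6)‖(Ŝᵀ)†‖Δ²` where `Ŝ = S/Δ`. -/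
theorem gcsg_error_bound_underdetermined {n m : ℕ}
    (f : EuclideanSpace ℝ (Fin n) → ℝ)
    (x₀ : EuclideanSpace ℝ (Fin n)) (Δbar L Δ : ℝ)
    (hf : ContDiffOn ℝ 3 f (ball x₀ Δbar))
    (hL : ∀ x ∈ ball x₀ Δbar, ∀ y ∈ ball x₀ Δbar,
      ‖fderiv ℝ (fderiv ℝ f) x - fderiv ℝ (fderiv ℝ f) y‖ ≤ L * ‖x - y‖)
    (d : Fin m → EuclideanSpace ℝ (Fin n))
    (hΔ : ∀ i, ‖d i‖ ≤ Δ) (hΔpos : 0 < Δ) (hΔbar : Δ < Δbar)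
    (S : Matrix (Fin n) (Fin m) ℝ) (hS : S = Matrix.of fun j i => d i j)
    (hmn : m < n) (hrank : S.rank = m)
    (P : Matrix (Fin n) (Fin m) ℝ) (hP : IsMPInv Sᵀ P) :
    ‖(WithLp.equiv 2 (Fin n → ℝ)).symm fun j =>
        (P * Sᵀ).mulVec (P.mulVec fun i => (f (x₀ + d i) - f (x₀ - d i)) / 2) j -
          (P * Sᵀ).mulVec (WithLp.equiv 2 (Fin n → ℝ) (gradient f x₀)) j‖ ≤
      L * Real.sqrt m / 6 * opNorm (Δ • P) * Δ ^ 2 := by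
  have hL0 : 0 ≤ L := by
    have hn : 0 < n := lt_of_le_of_lt (Nat.zero_le m) hmn
    set e : EuclideanSpace ℝ (Fin n) := EuclideanSpace.single (⟨0, hn⟩ : Fin n) (1 : ℝ)
    have he : ‖e‖ = 1 := by simp [e, EuclideanSpace.norm_single]
    have hx₀ : x₀ ∈ ball x₀ Δbar := by
      simp [mem_ball]; linarith
    have hy : x₀ + (Δ / 2) • e ∈ ball x₀ Δbar := by
      simp only [mem_ball, dist_eq_norm, add_sub_cancel_left]
      rw [norm_smul, Real.norm_eq_abs, he, abs_of_pos (by linarith)]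
      linarith
    have h := hL _ hy _ hx₀
    have hnn : (0:ℝ) ≤ ‖fderiv ℝ (fderiv ℝ f) (x₀ + (Δ / 2) • e)
        - fderiv ℝ (fderiv ℝ f) x₀‖ := by positivity
    have hdist : ‖(x₀ + (Δ / 2) • e) - x₀‖ = Δ / 2 := by
      rw [add_sub_cancel_left, norm_smul, Real.norm_eq_abs, he, abs_of_pos (by linarith)]
      ring
    rw [hdist] at h
    nlinarith
  set δv : Fin m → ℝ := fun i => (f (x₀ + d i) - f (x₀ - d i)) / 2 with hδv
  set g : Fin n → ℝ := WithLp.equiv 2 (Fin n → ℝ) (gradient f x₀) with hg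
  set w : Fin m → ℝ := fun i => δv i - Sᵀ.mulVec g i with hw
  have hvec : (fun j => (P * Sᵀ).mulVec (P.mulVec δv) j - (P * Sᵀ).mulVec g j)
      = P.mulVec w := by
    have h1 : (P * Sᵀ).mulVec (P.mulVec δv) = P.mulVec δv := by
      rw [Matrix.mulVec_mulVec, hP.2.1]
    have h2 : (P * Sᵀ).mulVec g = P.mulVec (Sᵀ.mulVec g) := by
      rw [Matrix.mulVec_mulVec]
    funext j
    rw [h1, h2]
    have : w = δv - Sᵀ.mulVec g := rfl
    rw [this, Matrix.mulVec_sub]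
    simp
  have hcomp : ∀ i, |w i| ≤ L * Δ ^ 3 / 6 := by
    intro i
    have hfd : Sᵀ.mulVec g i = fderiv ℝ f x₀ (d i) := by
      have h1 : fderiv ℝ f x₀ (d i) = @inner ℝ _ _ (gradient f x₀) (d i) :=
        (InnerProductSpace.toDual_symm_apply).symm
      rw [h1, PiLp.inner_apply]
      simp only [RCLike.inner_apply, conj_trivial]
      rw [hS]
      simp only [Matrix.mulVec, dotProduct, Matrix.transpose_apply, Matrix.of_apply]
      exact Finset.sum_congr rfl fun j _ => rfl
    have hball : ‖d i‖ < Δbar := lt_of_le_of_lt (hΔ i) hΔbar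
    have hcd := central_diff_bound f x₀ Δbar L hf hL (d i) hball
    have heq : w i = (f (x₀ + d i) - f (x₀ - d i)) / 2 - fderiv ℝ f x₀ (d i) := by
      show δv i - Sᵀ.mulVec g i = _
      rw [hfd]
    rw [heq]
    refine le_trans hcd ?_
    have : ‖d i‖ ^ 3 ≤ Δ ^ 3 := by
      exact pow_le_pow_left₀ (norm_nonneg _) (hΔ i) 3
    have := mul_le_mul_of_nonneg_left this hL0
    linarith
  have hnorm2 : ‖(WithLp.equiv 2 (Fin m → ℝ)).symm w‖ ≤ Real.sqrt m * (L * Δ ^ 3 / 6) := by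
    rw [EuclideanSpace.norm_eq]
    have hc : (0:ℝ) ≤ L * Δ ^ 3 / 6 := by positivity
    have hsum : ∑ i, ‖(WithLp.equiv 2 (Fin m → ℝ)).symm w i‖ ^ 2
        ≤ ∑ _i : Fin m, (L * Δ ^ 3 / 6) ^ 2 := by
      refine Finset.sum_le_sum fun i _ => ?_
      have hwi : ‖(WithLp.equiv 2 (Fin m → ℝ)).symm w i‖ = |w i| := rfl
      rw [hwi]
      have := hcomp i
      nlinarith [abs_nonneg (w i)]
    refine le_trans (Real.sqrt_le_sqrt hsum) ?_
    rw [Finset.sum_const, Finset.card_univ, Fintype.card_fin, nsmul_eq_mul]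
    rw [Real.sqrt_mul (by positivity), Real.sqrt_sq hc]
  have hnorm1 : ‖(WithLp.equiv 2 (Fin n → ℝ)).symm (P.mulVec w)‖
      ≤ opNorm P * ‖(WithLp.equiv 2 (Fin m → ℝ)).symm w‖ := by
    have h := (LinearMap.toContinuousLinearMap (Matrix.toEuclideanLin P)).le_opNorm
      ((WithLp.equiv 2 (Fin m → ℝ)).symm w)
    rw [opNorm]
    have happ : (LinearMap.toContinuousLinearMap (Matrix.toEuclideanLin P))
        ((WithLp.equiv 2 (Fin m → ℝ)).symm w)
        = (WithLp.equiv 2 (Fin n → ℝ)).symm (P.mulVec w) := by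
      simp [Matrix.toEuclideanLin_apply]
    rwa [happ] at h
  have hop : opNorm (Δ • P) = Δ * opNorm P := by
    rw [opNorm, opNorm]
    have h1 : Matrix.toEuclideanLin (Δ • P) = Δ • Matrix.toEuclideanLin P :=
      _root_.map_smul _ _ _
    rw [h1, _root_.map_smul]
    rw [norm_smul Δ (LinearMap.toContinuousLinearMap (Matrix.toEuclideanLin P)),
      Real.norm_eq_abs, abs_of_pos hΔpos]
  calc ‖(WithLp.equiv 2 (Fin n → ℝ)).symm fun j =>
        (P * Sᵀ).mulVec (P.mulVec δv) j - (P * Sᵀ).mulVec g j‖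
      = ‖(WithLp.equiv 2 (Fin n → ℝ)).symm (P.mulVec w)‖ := by rw [hvec]
    _ ≤ opNorm P * ‖(WithLp.equiv 2 (Fin m → ℝ)).symm w‖ := hnorm1
    _ ≤ opNorm P * (Real.sqrt m * (L * Δ ^ 3 / 6)) := by
        have h0 : (0:ℝ) ≤ opNorm P := norm_nonneg _
        exact mul_le_mul_of_nonneg_left hnorm2 h0
    _ = L * Real.sqrt m / 6 * opNorm (Δ • P) * Δ ^ 2 := by rw [hop]; ring
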